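/- arXiv:1801.04776 — 4 statements merged into one kernel-verified Lean document; each statement's English description precedes it below -/
import Mathlib

section
/- Let (A, A⁺) be a local pair. Let a be a proper ideal of A (so that a ⊆ m ⊆ A⁺, and a is in particular an ideal of A⁺), and let M⁺ be an A⁺-module such that M⁺ ⊗_{A⁺} A is a flat A-module. Then Tor₁^{A⁺}(M⁺, A⁺/a) = 0; equivalently, the natural map a ⊗_{A⁺} M⁺ → M⁺ is injective. -/
open TensorProduct

/-- Let `(A, A⁺)` be a local pair: `A` is a commutative local ring and every
element of `A` not lying in the subring `A⁺` is a unit of `A` whose inverse lies in `A⁺`.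
Let `a` be a proper ideal of `A` (hence `a ⊆ A⁺`, and `a` is an ideal of `A⁺`, rendered here
as the preimage of `a` in `A⁺`), and let `M⁺` be an `A⁺`-module such that `M⁺ ⊗_{A⁺} A` is a
flat `A`-module.  Then `Tor₁^{A⁺}(M⁺, A⁺/a) = 0`, equivalently (and as stated here) the natural
map `a ⊗_{A⁺} M⁺ → M⁺` is injective. -/
theorem statement1 {A : Type*} [CommRing A] [IsLocalRing A] (Aplus : Subring A)
    (hpair : ∀ x : A, x ∉ Aplus → ∃ y ∈ Aplus, x * y = 1)
    (a : Ideal A) (ha : a ≠ ⊤)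
    (Mplus : Type*) [AddCommGroup Mplus] [Module ↥Aplus Mplus]
    (hflat : Module.Flat A (TensorProduct ↥Aplus A Mplus)) :
    Function.Injective
      (TensorProduct.lift ((LinearMap.lsmul ↥Aplus Mplus).comp
        (Ideal.comap (algebraMap ↥Aplus A) a).subtype)) := by
  set R := ↥Aplus
  -- a ⊆ Aplus
  have haA : ∀ x : A, x ∈ a → x ∈ Aplus := by
    intro x hx
    by_contra hxn
    obtain ⟨y, hy, hxy⟩ := hpair x hxn
    exact ha (Ideal.eq_top_of_isUnit_mem a hx (isUnit_iff_exists_inv.mpr ⟨y, hxy⟩))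
  set I := Ideal.comap (algebraMap R A) a with hI
  set N := TensorProduct R A Mplus with hN
  -- the equivalence I ≃ₗ[R] a
  let e1 : I ≃ₗ[R] a :=
    { toFun := fun x => ⟨((x : R) : A), x.2⟩
      map_add' := fun x y => rfl
      map_smul' := fun r x => rfl
      invFun := fun y => ⟨⟨(y : A), haA _ y.2⟩, y.2⟩
      left_inv := fun x => rfl
      right_inv := fun y => rfl }
  let f : TensorProduct R I Mplus →ₗ[R] Mplus :=
    TensorProduct.lift ((LinearMap.lsmul R Mplus).comp I.subtype)
  let g : Mplus →ₗ[R] N := TensorProduct.mk R A Mplus 1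
  let φ : TensorProduct R I Mplus →ₗ[R] N :=
    (((TensorProduct.lid A N).toLinearMap.restrictScalars R).comp
      (((LinearMap.rTensor N (Submodule.subtype a)).restrictScalars R).comp
        ((((TensorProduct.AlgebraTensorModule.cancelBaseChange R A A (↥a) Mplus).symm.toLinearMap).restrictScalars R).comp
          (LinearEquiv.rTensor Mplus e1).toLinearMap)))
  have hcomp : g.comp f = φ := by
    apply TensorProduct.ext'
    intro x m
    show (1 : A) ⊗ₜ[R] ((x : R) • m) = _
    simp only [φ, LinearMap.comp_apply, LinearMap.restrictScalars_apply,
      LinearEquiv.coe_coe, LinearEquiv.rTensor_tmul,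
      TensorProduct.AlgebraTensorModule.cancelBaseChange_symm_tmul,
      LinearMap.rTensor_tmul, Submodule.subtype_apply, TensorProduct.lid_tmul]
    rw [← TensorProduct.smul_tmul]
    show _ = ((x : R) : A) • (1 : A) ⊗ₜ[R] m
    rw [TensorProduct.smul_tmul']
    congr 1
  have hφ : Function.Injective φ := by
    simp only [φ, LinearMap.coe_comp, LinearMap.coe_restrictScalars, LinearEquiv.coe_coe]
    refine Function.Injective.comp ?_ (Function.Injective.comp ?_ (Function.Injective.comp ?_ ?_))
    · exact (TensorProduct.lid A N).injective
    · exact Module.Flat.iff_rTensor_injective'.mp hflat a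
    · exact (TensorProduct.AlgebraTensorModule.cancelBaseChange R A A (↥a) Mplus).symm.injective
    · exact (LinearEquiv.rTensor Mplus e1).injective
  have : Function.Injective (g.comp f) := by rw [hcomp]; exact hφ
  exact fun t t' h => this (congrArg g h : g.comp f t = g.comp f t')
end

section
/- Let A be a linearly topologized commutative topological ring (the topology admits a basis of neighborhoods of 0 consisting of ideals) and let σ: A → Â be the canonical map to its completion, which is again a topological ring. Then the mutually inverse bijections B ↦ (closure of σ(B) in Â) and C ↦ σ⁻¹(C) between the set of open subrings of A and the set of open subrings of Â restrict to a bijection between the open subrings of A that are integrally closed in A and the open subrings of Â that are integrally closed in Â. In particular, if B is an open subring of A integrally closed in A, then the closure of σ(B) in Â is an open subring integrally closed in Â and σ⁻¹(closure of σ(B)) = B. -/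
open UniformSpace

open Polynomial

section Helpers

/-- Integrality over a subring, rephrased with polynomials over the ambient ring. -/
theorem isIntegral_subring_iff' {R : Type*} [CommRing R] {S : Subring R} {x : R} :
    IsIntegral ↥S x ↔ ∃ p : R[X], p.Monic ∧ (∀ i, p.coeff i ∈ S) ∧ p.eval x = 0 := by
  constructor
  · rintro ⟨p, hm, he⟩
    refine ⟨p.map (algebraMap ↥S R), hm.map _, fun i => ?_, ?_⟩
    · rw [Polynomial.coeff_map]; exact (p.coeff i).2
    · rwa [Polynomial.eval_map]
  · rintro ⟨p, hm, hc, he⟩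
    have hsub : (↑p.coeffs : Set R) ⊆ S := by
      intro c hcm
      obtain ⟨n, -, rfl⟩ := Polynomial.mem_coeffs_iff.mp hcm
      exact hc n
    refine ⟨p.toSubring S hsub, (Polynomial.monic_toSubring _ _ _).mpr hm, ?_⟩
    have hmap : Polynomial.map (algebraMap ↥S R) (p.toSubring S hsub) = p := by
      ext n
      rw [Polynomial.coeff_map]; exact Polynomial.coeff_toSubring p S hsub
    rw [← Polynomial.eval_map, hmap, he]

/-- If an element of `S` is of the shape `a ^ n + ∑_{i<n} b i * a ^ i` with all `b i ∈ S`,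
`n > 0`, and `S` is integrally closed, then `a ∈ S`. -/
theorem integral_of_combo {R : Type*} [CommRing R] (S : Subring R)
    (hS : ∀ x : R, IsIntegral ↥S x → x ∈ S) (a : R) (n : ℕ) (hn : 0 < n) (b : ℕ → R)
    (hb : ∀ i, b i ∈ S) (h : a ^ n + ∑ i ∈ Finset.range n, b i * a ^ i ∈ S) : a ∈ S := by
  apply hS
  rw [isIntegral_subring_iff']
  set v := a ^ n + ∑ i ∈ Finset.range n, b i * a ^ i with hv
  refine ⟨X ^ n + (∑ i ∈ Finset.range n, C (b i) * X ^ i - C v), ?_, ?_, ?_⟩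
  · apply Polynomial.monic_X_pow_add
    apply lt_of_le_of_lt (Polynomial.degree_sub_le _ _)
    rw [max_lt_iff]
    constructor
    · apply lt_of_le_of_lt (Polynomial.degree_sum_le _ _)
      rw [Finset.sup_lt_iff (by exact_mod_cast WithBot.bot_lt_coe n)]
      intro i hi
      exact lt_of_le_of_lt (Polynomial.degree_C_mul_X_pow_le _ _)
        (by exact_mod_cast Finset.mem_range.mp hi)
    · exact lt_of_le_of_lt Polynomial.degree_C_le (by exact_mod_cast hn)
  · intro k
    simp only [Polynomial.coeff_add, Polynomial.coeff_sub, Polynomial.coeff_X_pow,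
      Polynomial.finset_sum_coeff, Polynomial.coeff_C_mul, Polynomial.coeff_C,
      mul_ite, mul_one, mul_zero, Finset.sum_ite_eq, Finset.mem_range]
    refine S.add_mem ?_ (S.sub_mem ?_ ?_) <;> split_ifs <;>
      first
        | exact S.one_mem
        | exact S.zero_mem
        | exact hb _
        | exact h
  · simp only [Polynomial.eval_add, Polynomial.eval_sub, Polynomial.eval_pow,
      Polynomial.eval_X, Polynomial.eval_C, Polynomial.eval_finset_sum, Polynomial.eval_mul]
    rw [hv]; ring

variable {A : Type*} [CommRing A] [UniformSpace A] [IsUniformAddGroup A] [IsTopologicalRing A]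

local notation "σ" => (Completion.coeRingHom : A →+* Completion A)

theorem comap_closure_map (B : Subring A) (hB : IsOpen (B : Set A)) :
    Subring.comap σ ((B.map σ).topologicalClosure) = B := by
  ext a
  simp only [Subring.mem_comap]
  constructor
  · intro ha
    have hcl : (↑((B.map σ).topologicalClosure) : Set (Completion A))
        = closure (((↑) : A → Completion A) '' (B : Set A)) := rfl
    have hBclosed : IsClosed (B : Set A) :=
      B.toAddSubgroup.isClosed_of_isOpen hB
    have hind := (Completion.isUniformInducing_coe A).isInducing.closure_eq_preimage_closure_image
      (B : Set A)
    have ha' : a ∈ closure (B : Set A) := by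
      rw [hind]
      exact (hcl ▸ ha : (σ) a ∈ closure (((↑) : A → Completion A) '' (B : Set A)))
    rwa [hBclosed.closure_eq] at ha'
  · intro ha
    exact (B.map σ).le_topologicalClosure ⟨a, ha, rfl⟩

theorem isOpen_closure_map (B : Subring A) (hB : IsOpen (B : Set A)) :
    IsOpen (((B.map σ).topologicalClosure : Subring (Completion A)) : Set (Completion A)) := by
  have hnh : ((↑((B.map σ).topologicalClosure) : Set (Completion A))) ∈ nhds (0 : Completion A) := by
    have hcl : ((↑((B.map σ).topologicalClosure) : Set (Completion A)))
        = closure (((↑) : A → Completion A) '' (B : Set A)) := rfl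
    rw [hcl]
    have := (Completion.isDenseInducing_coe (α := A)).closure_image_mem_nhds
      (hB.mem_nhds B.zero_mem)
    rwa [Completion.coe_zero] at this
  exact AddSubgroup.isOpen_of_mem_nhds ((B.map σ).topologicalClosure).toAddSubgroup hnh

theorem exists_ideal_completion
    (hlin : ∀ U ∈ nhds (0 : A), ∃ I : Ideal A, (I : Set A) ∈ nhds (0 : A) ∧ (I : Set A) ⊆ U)
    {U : Set (Completion A)} (hU : U ∈ nhds (0 : Completion A)) :
    ∃ J : Ideal (Completion A),
      (J : Set (Completion A)) ∈ nhds (0 : Completion A) ∧ (J : Set (Completion A)) ⊆ U := by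
  obtain ⟨V, ⟨hVnhds, hVclosed⟩, hVU⟩ := (closed_nhds_basis (0 : Completion A)).mem_iff.mp hU
  have hpre : (⇑σ) ⁻¹' V ∈ nhds (0 : A) := by
    have hco := (Completion.continuous_coeRingHom (α := A)).continuousAt (x := (0 : A))
    apply hco.preimage_mem_nhds
    rwa [map_zero]
  obtain ⟨I, hI0, hIV⟩ := hlin _ hpre
  have hmaps : ∀ a : A, Set.MapsTo (fun y => (σ) a * y)
      ((⇑σ) '' (I : Set A)) ((⇑σ) '' (I : Set A)) := by
    rintro a _ ⟨i, hi, rfl⟩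
    exact ⟨a * i, I.mul_mem_left a hi, map_mul σ a i⟩
  refine ⟨{ carrier := closure ((⇑σ) '' (I : Set A))
            zero_mem' := subset_closure ⟨0, I.zero_mem, map_zero σ⟩
            add_mem' := fun {a b} ha hb => map_mem_closure₂ continuous_add ha hb ?_
            smul_mem' := fun c x hx => ?_ }, ?_, ?_⟩
  · rintro _ ⟨i, hi, rfl⟩ _ ⟨j, hj, rfl⟩
    exact ⟨i + j, I.add_mem hi hj, map_add σ i j⟩
  · have hT : IsClosed {c : Completion A | c * x ∈ closure ((⇑σ) '' (I : Set A))} :=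
      isClosed_closure.preimage (continuous_id.mul continuous_const)
    have hrange : Set.range ((↑) : A → Completion A)
        ⊆ {c : Completion A | c * x ∈ closure ((⇑σ) '' (I : Set A))} := by
      rintro _ ⟨a, rfl⟩
      exact map_mem_closure (continuous_const.mul continuous_id) hx (hmaps a)
    have hsub := closure_minimal hrange hT
    rw [Completion.denseRange_coe.closure_range] at hsub
    exact hsub (Set.mem_univ c)
  · have := (Completion.isDenseInducing_coe (α := A)).closure_image_mem_nhds hI0
    rwa [Completion.coe_zero] at this
  · exact (closure_minimal ((Set.image_subset_iff).mpr fun a ha => hIV ha) hVclosed).trans hVU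

theorem map_comap_closure (C : Subring (Completion A)) (hC : IsOpen (C : Set (Completion A))) :
    ((C.comap σ).map σ).topologicalClosure = C := by
  apply SetLike.ext'
  have h1 : (↑(((C.comap σ).map σ).topologicalClosure) : Set (Completion A))
      = closure ((⇑σ) '' ((⇑σ) ⁻¹' (C : Set (Completion A)))) := rfl
  rw [h1]
  apply subset_antisymm
  · exact closure_minimal (Set.image_preimage_subset _ _)
      (C.toAddSubgroup.isClosed_of_isOpen hC)
  · intro c hc
    rw [mem_closure_iff]
    intro o ho hco
    obtain ⟨a, ha⟩ := Completion.denseRange_coe.exists_mem_open (ho.inter hC) ⟨c, hco, hc⟩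
    exact ⟨(a : Completion A), ha.1, a, ha.2, rfl⟩

theorem intClosed_closure_map
    (hlin : ∀ U ∈ nhds (0 : A), ∃ I : Ideal A, (I : Set A) ∈ nhds (0 : A) ∧ (I : Set A) ⊆ U)
    (B : Subring A) (hB : IsOpen (B : Set A))
    (hint : ∀ a : A, IsIntegral ↥B a → a ∈ B) (x : Completion A)
    (hx : IsIntegral ↥((B.map σ).topologicalClosure) x) :
    x ∈ (B.map σ).topologicalClosure := by
  have hCopen : IsOpen ((↑((B.map σ).topologicalClosure)) : Set (Completion A)) :=
    isOpen_closure_map B hB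
  obtain ⟨J, hJn, hJC⟩ := exists_ideal_completion hlin
    (hCopen.mem_nhds ((B.map σ).topologicalClosure.zero_mem))
  obtain ⟨p, hm, hcoeff, he⟩ := isIntegral_subring_iff'.mp hx
  set n := p.natDegree with hn
  rcases Nat.eq_zero_or_pos n with h0 | hpos
  · have hp1 : p = 1 := hm.natDegree_eq_zero.mp h0
    have h10 : (1 : Completion A) = 0 := by rw [hp1] at he; simpa using he
    have hx0 : x = 0 := by rw [← mul_one x, h10, mul_zero]
    rw [hx0]; exact ((B.map σ).topologicalClosure).zero_mem
  · have hJopen : IsOpen (J : Set (Completion A)) :=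
      AddSubgroup.isOpen_of_mem_nhds J.toAddSubgroup hJn
    -- choose `a` approximating `x`
    obtain ⟨a, ha⟩ := Completion.denseRange_coe.exists_mem_open
      (show IsOpen ((fun y => x - y) ⁻¹' (J : Set (Completion A))) from
        hJopen.preimage (continuous_const.sub continuous_id))
      ⟨x, by
        simp only [Set.mem_preimage, sub_self]
        exact SetLike.mem_coe.mpr J.zero_mem⟩
    have hax : x - (σ) a ∈ J := ha
    -- choose `b i` approximating the coefficients
    have hbex : ∀ i : ℕ, ∃ b : A, b ∈ B ∧ p.coeff i - (σ) b ∈ J := by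
      intro i
      have hci : p.coeff i ∈ closure ((⇑σ) '' (B : Set A)) := hcoeff i
      obtain ⟨y, hy1, b, hbB, rfl⟩ := mem_closure_iff.mp hci
        ((fun y => p.coeff i - y) ⁻¹' (J : Set (Completion A)))
        (hJopen.preimage (continuous_const.sub continuous_id))
        (by
          simp only [Set.mem_preimage, sub_self]
          exact SetLike.mem_coe.mpr J.zero_mem)
      exact ⟨b, hbB, hy1⟩
    choose b hbB hbJ using hbex
    set e : A := a ^ n + ∑ i ∈ Finset.range n, b i * a ^ i with hedef
    have hpow : ∀ y z : Completion A, y - z ∈ J → ∀ k : ℕ, y ^ k - z ^ k ∈ J := by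
      intro y z hyz k
      obtain ⟨c, hc⟩ := sub_dvd_pow_sub_pow y z k
      rw [hc]; exact J.mul_mem_right c hyz
    have hax' : (σ) a - x ∈ J := by
      have := J.neg_mem hax
      simpa using this
    have hkey : (σ) e ∈ J := by
      have h1 : (σ) e = ((σ) a) ^ n + ∑ i ∈ Finset.range n, (σ) (b i) * ((σ) a) ^ i := by
        rw [hedef]
        simp [map_add, map_pow, map_sum, map_mul]
      have h2 : p.eval x = x ^ n + ∑ i ∈ Finset.range n, p.coeff i * x ^ i := by
        rw [Polynomial.eval_eq_sum_range, Finset.sum_range_succ, hm.coeff_natDegree]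
        ring
      have hterm : ∑ i ∈ Finset.range n,
            ((σ) (b i) * (((σ) a) ^ i - x ^ i) + ((σ) (b i) - p.coeff i) * x ^ i)
          = ∑ i ∈ Finset.range n, (σ) (b i) * ((σ) a) ^ i
            - ∑ i ∈ Finset.range n, p.coeff i * x ^ i := by
        rw [← Finset.sum_sub_distrib]
        exact Finset.sum_congr rfl fun i _ => by ring
      have hmem : (σ) e - p.eval x ∈ J := by
        have hre : (σ) e - p.eval x = (((σ) a) ^ n - x ^ n)
            + ∑ i ∈ Finset.range n,
              ((σ) (b i) * (((σ) a) ^ i - x ^ i) + ((σ) (b i) - p.coeff i) * x ^ i) := by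
          rw [h1, h2, hterm]; ring
        rw [hre]
        refine J.add_mem (hpow _ _ hax' n) (Ideal.sum_mem J fun i _ => J.add_mem ?_ ?_)
        · exact J.mul_mem_left _ (hpow _ _ hax' i)
        · refine J.mul_mem_right _ ?_
          have := J.neg_mem (hbJ i)
          simpa using this
      rwa [he, sub_zero] at hmem
    have heB : e ∈ B := by
      rw [← comap_closure_map B hB]
      exact Subring.mem_comap.mpr (hJC hkey)
    have haB : a ∈ B := integral_of_combo B hint a n hpos b hbB (by rw [← hedef]; exact heB)
    have hxeq : x = (σ) a + (x - (σ) a) := by ring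
    rw [hxeq]
    exact ((B.map σ).topologicalClosure).add_mem
      ((B.map σ).le_topologicalClosure ⟨a, haB, rfl⟩) (hJC hax)

theorem intClosed_comap (C : Subring (Completion A))
    (hint : ∀ x : Completion A, IsIntegral ↥C x → x ∈ C)
    (a : A) (ha : IsIntegral ↥(Subring.comap σ C) a) : a ∈ Subring.comap σ C := by
  obtain ⟨p, hm, hc, he⟩ := isIntegral_subring_iff'.mp ha
  rw [Subring.mem_comap]
  apply hint
  rw [isIntegral_subring_iff']
  refine ⟨p.map σ, hm.map _, fun i => ?_, ?_⟩
  · rw [Polynomial.coeff_map]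
    exact Subring.mem_comap.mp (hc i)
  · rw [Polynomial.eval_map, Polynomial.eval₂_at_apply, he, map_zero]

end Helpers

/-- Let `A` be a linearly topologized commutative topological ring (the
topology has a basis of neighborhoods of `0` consisting of ideals) and `σ : A → Â` the canonical
map to its completion.  The mutually inverse bijections `B ↦ closure σ(B)` and `C ↦ σ⁻¹(C)`
between open subrings of `A` and of `Â` restrict to a bijection between open subrings of `A`
integrally closed in `A` and open subrings of `Â` integrally closed in `Â`.  In particular, for
`B` an open integrally closed subring of `A`, the closure of `σ(B)` is an open integrally closed
subring of `Â` with `σ⁻¹(closure σ(B)) = B`. -/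
theorem statement5 {A : Type*} [CommRing A] [UniformSpace A] [IsUniformAddGroup A]
    [IsTopologicalRing A]
    (hlin : ∀ U ∈ nhds (0 : A), ∃ I : Ideal A, (I : Set A) ∈ nhds (0 : A) ∧ (I : Set A) ⊆ U) :
    (∀ B : Subring A, IsOpen (B : Set A) → (∀ x : A, IsIntegral ↥B x → x ∈ B) →
      (IsOpen (((B.map (Completion.coeRingHom : A →+* Completion A)).topologicalClosure :
          Subring (Completion A)) : Set (Completion A)) ∧
       (∀ x : Completion A,
          IsIntegral ↥((B.map (Completion.coeRingHom : A →+* Completion A)).topologicalClosure)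
            x → x ∈ (B.map (Completion.coeRingHom : A →+* Completion A)).topologicalClosure) ∧
       Subring.comap (Completion.coeRingHom : A →+* Completion A)
          ((B.map (Completion.coeRingHom : A →+* Completion A)).topologicalClosure) = B)) ∧
    (∀ C : Subring (Completion A), IsOpen (C : Set (Completion A)) →
      (∀ x : Completion A, IsIntegral ↥C x → x ∈ C) →
      (IsOpen ((Subring.comap (Completion.coeRingHom : A →+* Completion A) C : Subring A) :
          Set A) ∧
       (∀ x : A,
          IsIntegral ↥(Subring.comap (Completion.coeRingHom : A →+* Completion A) C) x →
            x ∈ Subring.comap (Completion.coeRingHom : A →+* Completion A) C) ∧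
       ((Subring.comap (Completion.coeRingHom : A →+* Completion A) C).map
          (Completion.coeRingHom : A →+* Completion A)).topologicalClosure = C)) := by
  constructor
  · intro B hB hint
    exact ⟨isOpen_closure_map B hB, intClosed_closure_map hlin B hB hint,
      comap_closure_map B hB⟩
  · intro C hC hint
    refine ⟨?_, intClosed_comap C hint, map_comap_closure C hC⟩
    exact hC.preimage (Completion.continuous_coeRingHom (α := A))
end

section
/- Let A be a linearly topologized commutative topological ring and let A⁺ ⊆ A be an open subring which is integrally closed in A and such that A⁺ ⊆ A is a Prüfer extension. Let σ: A → Â be the canonical map to the completion of A and let Â⁺ be the closure of σ(A⁺) in Â. Then Â⁺ ⊆ Â is a Prüfer extension. -/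
open UniformSpace

/-- A subring `S` of a commutative ring `R` makes `(R, S)` a *local pair* if `R` is local and
every element of `R` not lying in `S` is a unit of `R` whose inverse lies in `S`. -/
def Subring.IsLocalPair {R : Type*} [CommRing R] (S : Subring R) : Prop :=
  IsLocalRing R ∧ ∀ x : R, x ∉ S → ∃ y ∈ S, x * y = 1

/-- A subring `S ⊆ R` is a *Prüfer extension* if for every maximal ideal `P` of `S`,
the localizations of `S` and `R` at the multiplicative set `S \ P` form a local pair;
here the localization of `S` at `P` is identified with its image (the range of the canonical
map) in the localization of `R` at (the image of) `S \ P`. -/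
def Subring.IsPruferExtension {R : Type*} [CommRing R] (S : Subring R) : Prop :=
  ∀ (P : Ideal ↥S) (hP : P.IsMaximal),
    haveI : P.IsPrime := hP.isPrime
    Subring.IsLocalPair
      (RingHom.range
        (IsLocalization.map (Localization (P.primeCompl.map (algebraMap ↥S R)))
          (algebraMap ↥S R) (Submonoid.le_comap_map P.primeCompl) :
          Localization P.primeCompl →+* Localization (P.primeCompl.map (algebraMap ↥S R))))

section Crit

variable {R : Type*} [CommRing R]

/-- Elementwise criterion for being a Prüfer extension. -/
def PruferCrit (S : Subring R) : Prop :=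
  ∀ x : R, ∃ u v w : R, u ∈ S ∧ v ∈ S ∧ w ∈ S ∧ u + v * x + w * x ^ 2 = 1 ∧
    u * x ∈ S ∧ v * x ∈ S ∧ w * x ∈ S ∧ w * x ^ 2 ∈ S

variable (S : Subring R) (P : Ideal ↥S) [P.IsPrime]

/-- The canonical map from the localization of `S` at `P` to the localization of `R`. -/
noncomputable abbrev locMap : Localization P.primeCompl →+*
    Localization (P.primeCompl.map (algebraMap ↥S R)) :=
  IsLocalization.map _ (algebraMap ↥S R) (Submonoid.le_comap_map P.primeCompl)

/-- The canonical map `R → Localization`. -/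
noncomputable abbrev AMap : R →+* Localization (P.primeCompl.map (algebraMap ↥S R)) :=
  algebraMap R _

lemma mem_range_locMap_iff (z : Localization (P.primeCompl.map (algebraMap ↥S R))) :
    z ∈ (locMap S P).range ↔
      ∃ (a : ↥S) (s : P.primeCompl), z * AMap S P (algebraMap ↥S R s) = AMap S P (algebraMap ↥S R a) := by
  constructor
  · rintro ⟨ζ, rfl⟩
    obtain ⟨⟨a, s⟩, rfl⟩ := IsLocalization.mk'_surjective P.primeCompl ζ
    refine ⟨a, s, ?_⟩
    rw [IsLocalization.map_mk']
    exact IsLocalization.mk'_spec _ _ _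
  · rintro ⟨a, s, h⟩
    have hu : IsUnit (AMap S P (algebraMap ↥S R s)) :=
      IsLocalization.map_units _ ⟨algebraMap ↥S R s, Submonoid.mem_map_of_mem _ s.2⟩
    refine ⟨IsLocalization.mk' _ a s, ?_⟩
    refine hu.mul_right_cancel ?_
    rw [IsLocalization.map_mk', IsLocalization.mk'_spec, h]

lemma core_dichotomy (hC : PruferCrit S) (hmax : P.IsMaximal)
    (z : Localization (P.primeCompl.map (algebraMap ↥S R))) :
    z ∈ (locMap S P).range ∨ ∃ y ∈ (locMap S P).range, z * y = 1 := by
  obtain ⟨⟨r, t⟩, rfl⟩ := IsLocalization.mk'_surjective (P.primeCompl.map (algebraMap ↥S R)) z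
  obtain ⟨s, hsP, hgs⟩ := t.2
  obtain ⟨u, v, w, hu, hv, hw, h1, hux, hvx, hwx, hwx2⟩ := hC r
  set a₁ : ↥S := ⟨u, hu⟩ with ha₁
  set a₂ : ↥S := ⟨v * r, hvx⟩ with ha₂
  set a₃ : ↥S := ⟨w * r ^ 2, hwx2⟩ with ha₃
  have hspec :
      IsLocalization.mk' (Localization (P.primeCompl.map (algebraMap ↥S R))) r t * AMap S P ↑t = AMap S P r :=
    IsLocalization.mk'_spec _ _ _
  have hcase : a₁ ∉ P ∨ a₂ ∉ P ∨ a₃ ∉ P := by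
    by_contra hcon
    push_neg at hcon
    have hsum : a₁ + a₂ + a₃ = (1 : ↥S) := Subtype.ext (by simpa using h1)
    exact hmax.ne_top (Ideal.eq_top_iff_one _ |>.mpr
      (hsum ▸ P.add_mem (P.add_mem hcon.1 hcon.2.1) hcon.2.2))
  rcases hcase with h₁ | h₂ | h₃
  · left
    rw [mem_range_locMap_iff]
    have hmem1 : a₁ * s ∈ P.primeCompl :=
      Submonoid.mul_mem _ (show a₁ ∈ P.primeCompl from h₁) hsP
    refine ⟨⟨u * r, hux⟩, ⟨a₁ * s, hmem1⟩, ?_⟩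
    have H1 : AMap S P (algebraMap ↥S R ((⟨a₁ * s, hmem1⟩ : P.primeCompl) : ↥S))
        = AMap S P u * AMap S P ↑t := by
      have h' : algebraMap ↥S R ((⟨a₁ * s, hmem1⟩ : P.primeCompl) : ↥S) = u * (↑t : R) := by
        show algebraMap ↥S R (a₁ * s) = u * (↑t : R)
        rw [map_mul, hgs]; rfl
      rw [h', map_mul]
    have H2 : AMap S P (algebraMap ↥S R (⟨u * r, hux⟩ : ↥S)) = AMap S P u * AMap S P r := by
      have h' : algebraMap ↥S R (⟨u * r, hux⟩ : ↥S) = u * r := rfl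
      rw [h', map_mul]
    linear_combination
      (IsLocalization.mk' (Localization (P.primeCompl.map (algebraMap ↥S R))) r t) * H1
        + AMap S P u * hspec - H2
  · right
    have he : IsUnit (AMap S P (algebraMap ↥S R a₂)) :=
      IsLocalization.map_units _
        ⟨algebraMap ↥S R a₂, Submonoid.mem_map_of_mem _ (show a₂ ∈ P.primeCompl from h₂)⟩
    have hui : (↑he.unit⁻¹ : Localization (P.primeCompl.map (algebraMap ↥S R))) * ↑he.unit = 1 :=
      he.unit.inv_mul
    refine ⟨AMap S P v * AMap S P ↑t * ↑he.unit⁻¹, ?_, ?_⟩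
    · rw [mem_range_locMap_iff]
      refine ⟨⟨v, hv⟩ * s, ⟨a₂, show a₂ ∈ P.primeCompl from h₂⟩, ?_⟩
      have Hσ : AMap S P (algebraMap ↥S R
            (((⟨a₂, show a₂ ∈ P.primeCompl from h₂⟩ : P.primeCompl)) : ↥S)) = ↑he.unit :=
        he.unit_spec.symm
      have Ha : AMap S P (algebraMap ↥S R ((⟨v, hv⟩ : ↥S) * s))
          = AMap S P v * AMap S P ↑t := by
        have h' : algebraMap ↥S R ((⟨v, hv⟩ : ↥S) * s) = v * (↑t : R) := by
          rw [map_mul, hgs]; rfl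
        rw [h', map_mul]
      linear_combination (AMap S P v * AMap S P ↑t * ↑he.unit⁻¹) * Hσ
        + (AMap S P v * AMap S P ↑t) * hui - Ha
    · have hu1 : AMap S P (v * r) = ↑he.unit := he.unit_spec.symm
      have hvr : AMap S P (v * r) = AMap S P v * AMap S P r := map_mul _ _ _
      linear_combination (AMap S P v * ↑he.unit⁻¹) * hspec - ↑he.unit⁻¹ * hvr
        + ↑he.unit⁻¹ * hu1 + hui
  · right
    have he : IsUnit (AMap S P (algebraMap ↥S R a₃)) :=
      IsLocalization.map_units _
        ⟨algebraMap ↥S R a₃, Submonoid.mem_map_of_mem _ (show a₃ ∈ P.primeCompl from h₃)⟩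
    have hui : (↑he.unit⁻¹ : Localization (P.primeCompl.map (algebraMap ↥S R))) * ↑he.unit = 1 :=
      he.unit.inv_mul
    refine ⟨AMap S P (w * r) * AMap S P ↑t * ↑he.unit⁻¹, ?_, ?_⟩
    · rw [mem_range_locMap_iff]
      refine ⟨⟨w * r, hwx⟩ * s, ⟨a₃, show a₃ ∈ P.primeCompl from h₃⟩, ?_⟩
      have Hσ : AMap S P (algebraMap ↥S R
            (((⟨a₃, show a₃ ∈ P.primeCompl from h₃⟩ : P.primeCompl)) : ↥S)) = ↑he.unit :=
        he.unit_spec.symm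
      have Ha : AMap S P (algebraMap ↥S R ((⟨w * r, hwx⟩ : ↥S) * s))
          = AMap S P (w * r) * AMap S P ↑t := by
        have h' : algebraMap ↥S R ((⟨w * r, hwx⟩ : ↥S) * s) = w * r * (↑t : R) := by
          rw [map_mul, hgs]; rfl
        rw [h', map_mul]
      linear_combination (AMap S P (w * r) * AMap S P ↑t * ↑he.unit⁻¹) * Hσ
        + (AMap S P (w * r) * AMap S P ↑t) * hui - Ha
    · have hu1 : AMap S P (w * r ^ 2) = ↑he.unit := he.unit_spec.symm
      have hw2 : AMap S P (w * r ^ 2) = AMap S P r * AMap S P (w * r) := by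
        rw [← map_mul]; exact congrArg _ (by ring)
      linear_combination (AMap S P (w * r) * ↑he.unit⁻¹) * hspec - ↑he.unit⁻¹ * hw2
        + ↑he.unit⁻¹ * hu1 + hui


lemma nontrivial_loc :
    Nontrivial (Localization (P.primeCompl.map (algebraMap ↥S R))) := by
  refine ⟨⟨0, 1, fun h01 => ?_⟩⟩
  have h0 : AMap S P (0 : R) = AMap S P (1 : R) := by simpa using h01
  obtain ⟨c, hc⟩ := (IsLocalization.eq_iff_exists (P.primeCompl.map (algebraMap ↥S R)) _).mp h0
  obtain ⟨s, hsP, hgs⟩ := c.2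
  have hc0 : (c : R) = 0 := by simpa using hc.symm
  have hs0 : s = 0 := Subtype.ext (by rw [← hgs] at hc0; exact hc0)
  rw [hs0] at hsP
  exact hsP P.zero_mem

theorem crit_prufer' (hC : PruferCrit S) : S.IsPruferExtension := by
  intro P hP
  haveI := hP.isPrime
  haveI hnt : Nontrivial (Localization (P.primeCompl.map (algebraMap ↥S R))) :=
    nontrivial_loc S P
  constructor
  · refine IsLocalRing.of_isUnit_or_isUnit_one_sub_self fun z => ?_
    rcases core_dichotomy S P hC hP z with hz | ⟨y, _, hzy⟩
    · obtain ⟨ζ, rfl⟩ := hz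
      rcases IsLocalRing.isUnit_or_isUnit_one_sub_self ζ with h | h
      · exact Or.inl (h.map _)
      · refine Or.inr ?_
        have := h.map (locMap S P)
        rwa [map_sub, map_one] at this
    · exact Or.inl (IsUnit.of_mul_eq_one _ hzy)
  · intro z hz
    rcases core_dichotomy S P hC hP z with h | h
    · exact absurd h hz
    · exact h

theorem prufer_crit' {S : Subring R} (h : S.IsPruferExtension) : PruferCrit S := by
  classical
  intro x
  set J : Ideal ↥S :=
    { carrier := {t : ↥S | (t : R) * x ∈ S ∧ (t : R) * x ^ 2 ∈ S}
      add_mem' := by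
        rintro a b ⟨h1, h2⟩ ⟨h3, h4⟩
        constructor
        · have : ((a + b : ↥S) : R) * x = (a : R) * x + (b : R) * x := by push_cast; ring
          rw [this]; exact S.add_mem h1 h3
        · have : ((a + b : ↥S) : R) * x ^ 2 = (a : R) * x ^ 2 + (b : R) * x ^ 2 := by
            push_cast; ring
          rw [this]; exact S.add_mem h2 h4
      zero_mem' := by
        constructor
        · have : ((0 : ↥S) : R) * x = 0 := by push_cast; ring
          rw [this]; exact S.zero_mem
        · have : ((0 : ↥S) : R) * x ^ 2 = 0 := by push_cast; ring
          rw [this]; exact S.zero_mem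
      smul_mem' := by
        rintro c a ⟨h1, h2⟩
        constructor
        · have : ((c • a : ↥S) : R) * x = (c : R) * ((a : R) * x) := by
            rw [smul_eq_mul]; push_cast; ring
          rw [this]; exact S.mul_mem c.2 h1
        · have : ((c • a : ↥S) : R) * x ^ 2 = (c : R) * ((a : R) * x ^ 2) := by
            rw [smul_eq_mul]; push_cast; ring
          rw [this]; exact S.mul_mem c.2 h2 } with hJ
  set W : Ideal ↥S :=
    { carrier := {a : ↥S | ∃ t₁ ∈ J, ∃ t₂ ∈ J, ∃ t₃ ∈ J,
        (a : R) = (t₁ : R) + (t₂ : R) * x + (t₃ : R) * x ^ 2}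
      add_mem' := by
        rintro a b ⟨t₁, h₁, t₂, h₂, t₃, h₃, ha⟩ ⟨s₁, g₁, s₂, g₂, s₃, g₃, hb⟩
        refine ⟨t₁ + s₁, J.add_mem h₁ g₁, t₂ + s₂, J.add_mem h₂ g₂, t₃ + s₃, J.add_mem h₃ g₃, ?_⟩
        push_cast
        rw [ha, hb]; ring
      zero_mem' := ⟨0, J.zero_mem, 0, J.zero_mem, 0, J.zero_mem, by push_cast; ring⟩
      smul_mem' := by
        rintro c a ⟨t₁, h₁, t₂, h₂, t₃, h₃, ha⟩
        refine ⟨c * t₁, Ideal.mul_mem_left J c h₁, c * t₂, Ideal.mul_mem_left J c h₂,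
          c * t₃, Ideal.mul_mem_left J c h₃, ?_⟩
        rw [smul_eq_mul]
        push_cast
        rw [ha]; ring } with hW
  have hone : (1 : ↥S) ∈ W := by
    by_contra hone
    have hne : W ≠ ⊤ := fun ht => hone (ht ▸ Submodule.mem_top)
    obtain ⟨m, hm, hWm⟩ := Ideal.exists_le_maximal W hne
    haveI := hm.isPrime
    obtain ⟨_, hpair⟩ := h m hm
    by_cases hz : AMap S m x ∈ (locMap S m).range
    · rw [mem_range_locMap_iff] at hz
      obtain ⟨a, s, hzs⟩ := hz
      rw [← map_mul] at hzs
      obtain ⟨c, hc⟩ := (IsLocalization.eq_iff_exists (m.primeCompl.map (algebraMap ↥S R)) _).mp hzs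
      obtain ⟨τ, hτ, hgτ⟩ := c.2
      -- hc : ↑c * (x * algebraMap ↥S R ↑s) = ↑c * algebraMap ↥S R a
      rw [← hgτ] at hc
      simp only [Algebra.algebraMap_ofSubsemiring_apply] at hc
      have hbx : ((τ * (s : ↥S) : ↥S) : R) * x = ((τ * a : ↥S) : R) := by
        push_cast
        linear_combination hc
      have hbJ : (τ * (s : ↥S)) * (τ * (s : ↥S)) ∈ J := by
        constructor
        · have h' : (((τ * (s : ↥S)) * (τ * (s : ↥S)) : ↥S) : R) * x
              = (((τ * (s : ↥S)) * (τ * a) : ↥S) : R) := by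
            push_cast at hbx ⊢
            linear_combination ((τ : R) * ((s : ↥S) : R)) * hbx
          rw [h']; exact ((τ * (s : ↥S)) * (τ * a)).2
        · have h' : (((τ * (s : ↥S)) * (τ * (s : ↥S)) : ↥S) : R) * x ^ 2
              = (((τ * a) * (τ * a) : ↥S) : R) := by
            push_cast at hbx ⊢
            linear_combination ((τ : R) * ((s : ↥S) : R) * x + ((τ : R) * (a : R))) * hbx
          rw [h']; exact ((τ * a) * (τ * a)).2
      have hbW : (τ * (s : ↥S)) * (τ * (s : ↥S)) ∈ W :=
        ⟨(τ * (s : ↥S)) * (τ * (s : ↥S)), hbJ, 0, J.zero_mem, 0, J.zero_mem, by push_cast; ring⟩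
      have hbP : (τ * (s : ↥S)) * (τ * (s : ↥S)) ∈ m.primeCompl :=
        Submonoid.mul_mem _ (Submonoid.mul_mem _ hτ s.2) (Submonoid.mul_mem _ hτ s.2)
      exact hbP (hWm hbW)
    · obtain ⟨y, hy, hxy⟩ := hpair _ hz
      rw [mem_range_locMap_iff] at hy
      obtain ⟨a, s, hys⟩ := hy
      have h2 : AMap S m (x * (algebraMap ↥S R a)) = AMap S m (algebraMap ↥S R (s : ↥S)) := by
        rw [map_mul]
        calc AMap S m x * AMap S m (algebraMap ↥S R a)
            = AMap S m x * (y * AMap S m (algebraMap ↥S R (s : ↥S))) := by rw [hys]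
          _ = (AMap S m x * y) * AMap S m (algebraMap ↥S R (s : ↥S)) := by ring
          _ = AMap S m (algebraMap ↥S R (s : ↥S)) := by rw [hxy, one_mul]
      obtain ⟨c, hc⟩ := (IsLocalization.eq_iff_exists (m.primeCompl.map (algebraMap ↥S R)) _).mp h2
      obtain ⟨τ, hτ, hgτ⟩ := c.2
      rw [← hgτ] at hc
      simp only [Algebra.algebraMap_ofSubsemiring_apply] at hc
      have hdx : ((τ * a : ↥S) : R) * x = ((τ * (s : ↥S) : ↥S) : R) := by
        push_cast
        linear_combination hc
      have hdJ : (τ * a) * (τ * a) ∈ J := by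
        constructor
        · have h' : (((τ * a) * (τ * a) : ↥S) : R) * x
              = (((τ * a) * (τ * (s : ↥S)) : ↥S) : R) := by
            push_cast at hdx ⊢
            linear_combination ((τ : R) * (a : R)) * hdx
          rw [h']; exact ((τ * a) * (τ * (s : ↥S))).2
        · have h' : (((τ * a) * (τ * a) : ↥S) : R) * x ^ 2
              = (((τ * (s : ↥S)) * (τ * (s : ↥S)) : ↥S) : R) := by
            push_cast at hdx ⊢
            linear_combination ((τ : R) * (a : R) * x + (τ : R) * ((s : ↥S) : R)) * hdx
          rw [h']; exact ((τ * (s : ↥S)) * (τ * (s : ↥S))).2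
      have heW : (τ * (s : ↥S)) * (τ * (s : ↥S)) ∈ W := by
        refine ⟨0, J.zero_mem, 0, J.zero_mem, (τ * a) * (τ * a), hdJ, ?_⟩
        push_cast at hdx ⊢
        linear_combination (-((τ : R) * (a : R)) * x - (τ : R) * ((s : ↥S) : R)) * hdx
      have heP : (τ * (s : ↥S)) * (τ * (s : ↥S)) ∈ m.primeCompl :=
        Submonoid.mul_mem _ (Submonoid.mul_mem _ hτ s.2) (Submonoid.mul_mem _ hτ s.2)
      exact heP (hWm heW)
  obtain ⟨t₁, h₁, t₂, h₂, t₃, h₃, heq⟩ := hone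
  refine ⟨(t₁ : R), (t₂ : R), (t₃ : R), t₁.2, t₂.2, t₃.2, ?_, h₁.1, h₂.1, h₃.1, h₃.2⟩
  have h1 : ((1 : ↥S) : R) = 1 := rfl
  rw [h1] at heq
  linear_combination -heq

end Crit

/-- Let `A` be a linearly topologized commutative topological ring and
`A⁺ ⊆ A` an open subring, integrally closed in `A`, such that `A⁺ ⊆ A` is a Prüfer extension.
Let `σ : A → Â` be the canonical map to the completion and `Â⁺` the closure of `σ(A⁺)` in `Â`.
Then `Â⁺ ⊆ Â` is a Prüfer extension. -/
theorem statement6 {A : Type*} [CommRing A] [UniformSpace A] [IsUniformAddGroup A]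
    [IsTopologicalRing A]
    (hlin : ∀ U ∈ nhds (0 : A), ∃ I : Ideal A, (I : Set A) ∈ nhds (0 : A) ∧ (I : Set A) ⊆ U)
    (Aplus : Subring A) (hopen : IsOpen (Aplus : Set A))
    (hic : ∀ x : A, IsIntegral ↥Aplus x → x ∈ Aplus)
    (hpruf : Aplus.IsPruferExtension) :
    ((Aplus.map (Completion.coeRingHom : A →+* Completion A)).topologicalClosure :
      Subring (Completion A)).IsPruferExtension := by
  classical
  set σ : A →+* Completion A := Completion.coeRingHom with hσdef
  set Shat : Subring (Completion A) := (Aplus.map σ).topologicalClosure with hShat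
  have hcoe : ∀ a : A, σ a = (a : Completion A) := fun _ => rfl
  have hmem : ∀ a : A, a ∈ Aplus → σ a ∈ Shat := fun a ha =>
    Subring.le_topologicalClosure _ (Subring.mem_map.mpr ⟨a, ha, rfl⟩)
  -- the topology on A is induced by the coercion into the completion
  have hinduced := (Completion.isDenseInducing_coe (α := A)).toIsInducing.eq_induced
  obtain ⟨O, hO, hpre⟩ : ∃ O : Set (Completion A),
      IsOpen O ∧ ((↑) : A → Completion A) ⁻¹' O = (Aplus : Set A) := by
    rw [hinduced] at hopen
    obtain ⟨O, hO, hOeq⟩ := isOpen_induced_iff.mp hopen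
    exact ⟨O, hO, hOeq⟩
  have h0O : (0 : Completion A) ∈ O := by
    have h0 : ((0 : A) : Completion A) ∈ O := by
      rw [← Set.mem_preimage, hpre]; exact Aplus.zero_mem
    rwa [Completion.coe_zero] at h0
  have hdense : ∀ ξ : Completion A, ∃ x : A, ξ - σ x ∈ Shat := by
    intro ξ
    have hV : IsOpen ((fun a : Completion A => ξ - a) ⁻¹' O) :=
      hO.preimage (continuous_const.sub continuous_id)
    have hne : ((fun a : Completion A => ξ - a) ⁻¹' O).Nonempty :=
      ⟨ξ, by simpa using h0O⟩
    obtain ⟨x, hx⟩ := Completion.denseRange_coe.exists_mem_open hV hne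
    refine ⟨x, ?_⟩
    have hcl : ξ - σ x ∈ closure ((Aplus.map σ : Subring (Completion A)) : Set (Completion A)) := by
      rw [mem_closure_iff]
      intro o ho hηo
      have h2 : ξ - σ x ∈ closure (Set.range ((↑) : A → Completion A)) :=
        Completion.denseRange_coe _
      rw [mem_closure_iff] at h2
      obtain ⟨ζ, ⟨hζo, hζO⟩, b, rfl⟩ := h2 (o ∩ O) (ho.inter hO) ⟨hηo, hx⟩
      refine ⟨(b : Completion A), hζo, ?_⟩
      refine Subring.mem_map.mpr ⟨b, ?_, rfl⟩
      have hb : b ∈ ((↑) : A → Completion A) ⁻¹' O := hζO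
      rw [hpre] at hb
      exact hb
    exact hcl
  apply crit_prufer'
  intro ξ
  obtain ⟨x, hη⟩ := hdense ξ
  obtain ⟨u, v, w, hu, hv, hw, h1, hux, hvx, hwx, hwx2⟩ := prufer_crit' hpruf x
  set η : Completion A := ξ - σ x with hηdef
  have hξ : ξ = σ x + η := by rw [hηdef]; ring
  have Hu : σ u ∈ Shat := hmem u hu
  have Hv : σ v ∈ Shat := hmem v hv
  have Hw : σ w ∈ Shat := hmem w hw
  have Hux : σ (u * x) ∈ Shat := hmem _ hux
  have Hvx : σ (v * x) ∈ Shat := hmem _ hvx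
  have Hwx : σ (w * x) ∈ Shat := hmem _ hwx
  have Hwx2 : σ (w * x ^ 2) ∈ Shat := hmem _ hwx2
  have Hη : η ∈ Shat := hη
  refine ⟨σ u - σ v * η + σ w * η ^ 2, σ v - σ w * η - σ w * η, σ w,
    Shat.add_mem (Shat.sub_mem Hu (Shat.mul_mem Hv Hη))
      (Shat.mul_mem Hw (Shat.pow_mem Hη 2)),
    Shat.sub_mem (Shat.sub_mem Hv (Shat.mul_mem Hw Hη)) (Shat.mul_mem Hw Hη),
    Hw, ?_, ?_, ?_, ?_, ?_⟩
  · -- the identity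
    have hσ1 : σ u + σ v * σ x + σ w * σ x ^ 2 = 1 := by
      rw [← map_pow, ← map_mul, ← map_mul, ← map_add, ← map_add, h1, map_one]
    rw [hξ]
    linear_combination hσ1
  · -- u' * ξ ∈ Shat
    have he : (σ u - σ v * η + σ w * η ^ 2) * ξ =
        σ (u * x) + σ u * η - σ (v * x) * η - σ v * η ^ 2 + σ (w * x) * η ^ 2 + σ w * η ^ 3 := by
      simp only [map_mul]
      rw [hξ]
      ring
    rw [he]
    exact Shat.add_mem (Shat.add_mem (Shat.sub_mem (Shat.sub_mem
      (Shat.add_mem Hux (Shat.mul_mem Hu Hη)) (Shat.mul_mem Hvx Hη))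
      (Shat.mul_mem Hv (Shat.pow_mem Hη 2))) (Shat.mul_mem Hwx (Shat.pow_mem Hη 2)))
      (Shat.mul_mem Hw (Shat.pow_mem Hη 3))
  · -- v' * ξ ∈ Shat
    have he : (σ v - σ w * η - σ w * η) * ξ =
        σ (v * x) + σ v * η - σ (w * x) * η - σ (w * x) * η - σ w * η ^ 2 - σ w * η ^ 2 := by
      simp only [map_mul]
      rw [hξ]
      ring
    rw [he]
    exact Shat.sub_mem (Shat.sub_mem (Shat.sub_mem (Shat.sub_mem
      (Shat.add_mem Hvx (Shat.mul_mem Hv Hη)) (Shat.mul_mem Hwx Hη)) (Shat.mul_mem Hwx Hη))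
      (Shat.mul_mem Hw (Shat.pow_mem Hη 2))) (Shat.mul_mem Hw (Shat.pow_mem Hη 2))
  · -- w * ξ ∈ Shat
    have he : σ w * ξ = σ (w * x) + σ w * η := by
      simp only [map_mul]
      rw [hξ]
      ring
    rw [he]
    exact Shat.add_mem Hwx (Shat.mul_mem Hw Hη)
  · -- w * ξ ^ 2 ∈ Shat
    have he : σ w * ξ ^ 2 = σ (w * x ^ 2) + σ (w * x) * η + σ (w * x) * η + σ w * η ^ 2 := by
      simp only [map_mul, map_pow]
      rw [hξ]
      ring
    rw [he]
    exact Shat.add_mem (Shat.add_mem (Shat.add_mem Hwx2 (Shat.mul_mem Hwx Hη))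
      (Shat.mul_mem Hwx Hη)) (Shat.mul_mem Hw (Shat.pow_mem Hη 2))
end

section
/- Let A⁺ ⊆ A be commutative rings such that the inclusion A⁺ → A is weakly surjective, and let f ∈ A. Let A⁺[f] be the subring of A generated by A⁺ and f, let A_f be the localization of A at f, let A⁺[1/f] be the subring of A_f generated by the image of A⁺ and 1/f, let C be the integral closure of A⁺[f] in A, and let C_f be the integral closure of A⁺[1/f] in A_f. Then the natural homomorphisms A ⊗_{A⁺} C → A and A ⊗_{A⁺} C_f → A_f are isomorphisms. If in addition A⁺ ⊆ A is a Prüfer extension and A is noetherian, then A⁺[f] is integrally closed in A and A⁺[1/f] is integrally closed in A_f (so C = A⁺[f] and C_f = A⁺[1/f]). -/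
set_option maxHeartbeats 1000000
set_option synthInstance.maxHeartbeats 1000000

open TensorProduct Polynomial




/-- A ring homomorphism `f : R → A` is *weakly surjective* if for every prime ideal `p` of `R`
with `pA ≠ A`, the induced map on localizations `R_p → A_p` is surjective, where `A_p` is the
localization of `A` at the image of the multiplicative set `R ∖ p`. -/
def RingHom.WeaklySurjective {R A : Type*} [CommRing R] [CommRing A] (f : R →+* A) : Prop :=
  ∀ (p : Ideal R) (hp : p.IsPrime), Ideal.map f p ≠ ⊤ →
    haveI : p.IsPrime := hp
    Function.Surjective
      (IsLocalization.map (Localization (p.primeCompl.map f)) f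
        (Submonoid.le_comap_map p.primeCompl) :
        Localization p.primeCompl →+* Localization (p.primeCompl.map f))

section
variable {A : Type*} [CommRing A] (Aplus : Subring A)

def Dx (x : A) : Ideal ↥Aplus where
  carrier := {s | (s : A) * x ∈ Aplus}
  add_mem' := by intro a b ha hb; simpa [add_mul] using add_mem ha hb
  zero_mem' := by simpa using zero_mem Aplus
  smul_mem' := by
    intro r s hs
    simp only [Set.mem_setOf_eq, smul_eq_mul] at *
    have : ((r * s : ↥Aplus) : A) * x = (r : A) * ((s:A) * x) := by push_cast; ring
    rw [this]
    exact mul_mem r.2 hs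

theorem ws_elem (hws : (algebraMap ↥Aplus A).WeaklySurjective) (x : A) :
    Ideal.map (algebraMap ↥Aplus A) (Dx Aplus x) = ⊤ := by
  by_contra h
  obtain ⟨M, hM, hle⟩ := Ideal.exists_le_maximal _ h
  set fφ := algebraMap ↥Aplus A with hfφ
  set p := Ideal.comap fφ M with hp
  haveI hpp : p.IsPrime := Ideal.IsPrime.comap fφ
  have hmapne : Ideal.map fφ p ≠ ⊤ := fun hh => hM.ne_top (top_le_iff.mp (hh ▸ Ideal.map_comap_le))
  have hsurj := hws p hpp hmapne
  set T := p.primeCompl.map fφ with hT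
  obtain ⟨z, hz⟩ := hsurj (algebraMap A (Localization T) x)
  obtain ⟨⟨a, s⟩, has⟩ := IsLocalization.surj p.primeCompl z
  have hmapeq : algebraMap A (Localization T) (x * fφ s) = algebraMap A (Localization T) (fφ a) := by
    have := congrArg (IsLocalization.map (Localization T) fφ
        (Submonoid.le_comap_map p.primeCompl) : Localization p.primeCompl →+* Localization T) has
    rw [map_mul, hz, IsLocalization.map_eq, IsLocalization.map_eq] at this
    rw [map_mul]
    exact this
  obtain ⟨c, hc⟩ := IsLocalization.exists_of_eq (M := T) hmapeq
  obtain ⟨u, hu, huc⟩ := c.2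
  have key : ((u * s.1 : ↥Aplus) : A) * x ∈ Aplus := by
    have h1 : (c : A) * (x * fφ s.1) = (c:A) * fφ a := hc
    rw [← huc] at h1
    have : ((u * s.1 : ↥Aplus) : A) * x = ((u * a : ↥Aplus) : A) := by
      push_cast
      have : (u:A) * x * s.1 = (u:A) * a := by
        have h1' : (u:A) * (x * ((s.1 : ↥Aplus) : A)) = (u:A) * a := h1
        linear_combination h1'
      calc (u:A) * s.1 * x = (u:A) * x * s.1 := by ring
      _ = (u:A) * a := this
    rw [this]; exact (u * a).2
  have hin : u * s.1 ∈ p := by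
    have : fφ (u * s.1) ∈ Ideal.map fφ (Dx Aplus x) := Ideal.mem_map_of_mem fφ key
    exact hle this
  exact (Submonoid.mul_mem _ hu s.2) hin
end

section
variable {A : Type*} [CommRing A] (Aplus : Subring A)

theorem ideal_comb (I : Ideal ↥Aplus) (h : Ideal.map (algebraMap ↥Aplus A) I = ⊤) :
    ∃ (n : ℕ) (s : Fin n → ↥Aplus) (b : Fin n → A),
      (∀ i, s i ∈ I) ∧ ∑ i, b i * ((s i : ↥Aplus) : A) = 1 := by
  have h1 : (1 : A) ∈ Ideal.map (algebraMap ↥Aplus A) I := h ▸ Submodule.mem_top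
  rw [Ideal.map, Ideal.span] at h1
  obtain ⟨n, b, g, hg⟩ := Submodule.mem_span_set'.mp h1
  choose t ht hteq using fun i => (g i).2
  exact ⟨n, t, b, ht,
    by rw [← hg]; exact Finset.sum_congr rfl fun i _ => by rw [smul_eq_mul, ← hteq i]; rfl⟩
end
section
variable {A : Type*} [CommRing A] (Aplus : Subring A)

-- extract concrete equation from equality in localization at image monoid
theorem loc_eq_extract (S : Submonoid ↥Aplus) (r r' : A)
    (h : algebraMap A (Localization (S.map (algebraMap ↥Aplus A))) r =
         algebraMap A (Localization (S.map (algebraMap ↥Aplus A))) r') :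
    ∃ u ∈ S, ((u : ↥Aplus) : A) * r = ((u : ↥Aplus) : A) * r' := by
  obtain ⟨c, hc⟩ := IsLocalization.exists_of_eq (M := S.map (algebraMap ↥Aplus A)) h
  obtain ⟨u, hu, huc⟩ := c.2
  refine ⟨u, hu, ?_⟩
  have : (c : A) * r = (c : A) * r' := hc
  rw [← huc] at this
  exact this

theorem prufer_dichotomy (hpr : Aplus.IsPruferExtension) (P : Ideal ↥Aplus) (hP : P.IsMaximal)
    (x : A) :
    (∃ σ : ↥Aplus, σ ∉ P ∧ (σ : A) * x ∈ Aplus) ∨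
    (∃ α σ : ↥Aplus, σ ∉ P ∧ (α : A) * x = (σ : A)) := by
  haveI hPp : P.IsPrime := hP.isPrime
  obtain ⟨_, hpair⟩ := hpr P hP
  set fφ := algebraMap ↥Aplus A with hfφ
  set T := P.primeCompl.map fφ with hT
  set L := Localization T with hL
  set Φ : Localization P.primeCompl →+* L :=
    IsLocalization.map L fφ (Submonoid.le_comap_map P.primeCompl) with hΦ
  by_cases hx : algebraMap A L x ∈ Φ.range
  · obtain ⟨z, hz⟩ := hx
    obtain ⟨⟨a, s⟩, has⟩ := IsLocalization.surj P.primeCompl z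
    have h2 : algebraMap A L (x * fφ s.1) = algebraMap A L (fφ a) := by
      have := congrArg Φ has
      rw [map_mul, hz, hΦ, IsLocalization.map_eq, IsLocalization.map_eq] at this
      rw [map_mul]
      exact this
    obtain ⟨u, hu, hueq⟩ := loc_eq_extract Aplus P.primeCompl _ _ h2
    refine Or.inl ⟨u * s.1, Submonoid.mul_mem _ hu s.2, ?_⟩
    have : ((u * s.1 : ↥Aplus) : A) * x = ((u * a : ↥Aplus) : A) := by
      push_cast
      calc (u:A) * s.1 * x = (u:A) * (x * s.1) := by ring
      _ = (u:A) * a := hueq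
    rw [this]; exact (u * a).2
  · obtain ⟨y, hy, hxy⟩ := hpair _ hx
    obtain ⟨z, hz⟩ := hy
    obtain ⟨⟨a, s⟩, has⟩ := IsLocalization.surj P.primeCompl z
    have h2 : algebraMap A L (x * fφ a) = algebraMap A L (fφ s.1) := by
      have h3 := congrArg Φ has
      rw [map_mul, hz, hΦ, IsLocalization.map_eq, IsLocalization.map_eq] at h3
      have h4 : algebraMap A L x * (y * algebraMap A L (fφ s.1)) =
          algebraMap A L x * algebraMap A L (fφ a) := by rw [h3]
      rw [← mul_assoc, hxy, one_mul] at h4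
      rw [map_mul]
      exact h4.symm
    obtain ⟨u, hu, hueq⟩ := loc_eq_extract Aplus P.primeCompl _ _ h2
    refine Or.inr ⟨u * a, u * s.1, Submonoid.mul_mem _ hu s.2, ?_⟩
    push_cast
    calc (u:A) * a * x = (u :A) * (x * a) := by ring
    _ = (u:A) * s.1 := hueq
end

section
variable {A : Type*} [CommRing A] {Aplus : Subring A}


theorem tmul_rewrite
    (hW : ∀ x : A, ∃ (n : ℕ) (s : Fin n → ↥Aplus) (b : Fin n → A),
      (∀ i, ((s i : ↥Aplus) : A) * x ∈ Aplus) ∧ ∑ i, b i * ((s i : ↥Aplus) : A) = 1)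
    (Csub : Submodule ↥Aplus A) (h1 : (1 : A) ∈ Csub) (a : A) (c : ↥Csub) :
    (a ⊗ₜ[↥Aplus] c : A ⊗[↥Aplus] ↥Csub) = (a * (c : A)) ⊗ₜ ⟨1, h1⟩ := by
  obtain ⟨n, s, b, hs, hsum⟩ := hW (c : A)
  have step1 : (a ⊗ₜ[↥Aplus] c : A ⊗[↥Aplus] ↥Csub)
      = ∑ i, (a * (b i * ((s i : ↥Aplus) : A))) ⊗ₜ c := by
    rw [← TensorProduct.sum_tmul, ← Finset.mul_sum, hsum, mul_one]
  rw [step1]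
  have step2 : ∀ i, (a * (b i * ((s i : ↥Aplus) : A))) ⊗ₜ[↥Aplus] c
      = ((((s i : ↥Aplus) : A) * (c : A)) * (a * b i)) ⊗ₜ (⟨1, h1⟩ : ↥Csub) := by
    intro i
    have e1 : a * (b i * ((s i : ↥Aplus) : A)) = s i • (a * b i) := by
      show _ = (s i : A) * _; ring
    rw [e1, TensorProduct.smul_tmul]
    have e2 : s i • c = (⟨((s i : ↥Aplus) : A) * (c : A), hs i⟩ : ↥Aplus) • (⟨1, h1⟩ : ↥Csub) := by
      apply Subtype.ext
      show s i • (c : A) = _ • (1 : A)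
      show (s i : A) * (c : A) = (((s i : ↥Aplus) : A) * (c : A)) * 1
      ring
    rw [e2, TensorProduct.tmul_smul, TensorProduct.smul_tmul' ]
    rfl
  rw [Finset.sum_congr rfl fun i _ => step2 i, ← TensorProduct.sum_tmul]
  congr 1
  calc ∑ i, ((s i : ↥Aplus) : A) * (c : A) * (a * b i)
      = a * (c:A) * ∑ i, b i * ((s i : ↥Aplus) : A) := by rw [Finset.mul_sum]; congr 1; ext i; ring
  _ = a * (c : A) := by rw [hsum, mul_one]
end

section
variable {A : Type*} [CommRing A] {Aplus : Subring A}

theorem mu1_bij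
    (hW : ∀ x : A, ∃ (n : ℕ) (s : Fin n → ↥Aplus) (b : Fin n → A),
      (∀ i, ((s i : ↥Aplus) : A) * x ∈ Aplus) ∧ ∑ i, b i * ((s i : ↥Aplus) : A) = 1)
    (Csub : Submodule ↥Aplus A) (h1 : (1 : A) ∈ Csub) :
    Function.Bijective
      (TensorProduct.lift ((LinearMap.mul ↥Aplus A).compl₂ Csub.subtype) :
        A ⊗[↥Aplus] ↥Csub →ₗ[↥Aplus] A) := by
  set μ : A ⊗[↥Aplus] ↥Csub →ₗ[↥Aplus] A :=
    TensorProduct.lift ((LinearMap.mul ↥Aplus A).compl₂ Csub.subtype) with hμ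
  have hform : ∀ (a : A) (c : ↥Csub), μ (a ⊗ₜ c) = a * (c : A) := fun a c => by
    simp [hμ, TensorProduct.lift.tmul]
  have hrep : ∀ z : A ⊗[↥Aplus] ↥Csub, z = (μ z) ⊗ₜ ⟨1, h1⟩ := by
    intro z
    induction z using TensorProduct.induction_on with
    | zero => rw [map_zero, TensorProduct.zero_tmul]
    | tmul a c => rw [hform, tmul_rewrite hW Csub h1 a c]
    | add u v hu hv => rw [map_add, TensorProduct.add_tmul, ← hu, ← hv]
  constructor
  · intro z w h
    rw [hrep z, hrep w, h]
  · intro a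
    exact ⟨a ⊗ₜ ⟨1, h1⟩, by rw [hform, mul_one]⟩
end
section
variable {A : Type*} [CommRing A] {Aplus : Subring A} (f : A)

local notation "Af" => Localization.Away f
local notation "ψ" => algebraMap A (Localization.Away f)
local notation "g" => IsLocalization.Away.invSelf (S := Localization.Away f) f

theorem tmul_rewrite_loc
    (hW : ∀ x : A, ∃ (n : ℕ) (s : Fin n → ↥Aplus) (b : Fin n → A),
      (∀ i, ((s i : ↥Aplus) : A) * x ∈ Aplus) ∧ ∑ i, b i * ((s i : ↥Aplus) : A) = 1)
    (Cfsub : Submodule ↥Aplus Af) (hgm : ∀ m : ℕ, (g : Af)^m ∈ Cfsub)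
    (m : ℕ) (a x : A) (c : ↥Cfsub)
    (hx : ψ x = (ψ f)^m * (c : Af)) :
    (a ⊗ₜ[↥Aplus] c : A ⊗[↥Aplus] ↥Cfsub) = (a * x) ⊗ₜ ⟨(g : Af)^m, hgm m⟩ := by
  obtain ⟨n, s, b, hs, hsum⟩ := hW x
  have h1m : (ψ f)^m * (g:Af)^m = 1 := by
    rw [← mul_pow, IsLocalization.Away.mul_invSelf, one_pow]
  have hcg : (c : Af) = ψ x * (g:Af)^m := by
    calc (c:Af) = ↑c * ((ψ f)^m * (g:Af)^m) := by rw [h1m, mul_one]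
    _ = ψ x * (g:Af)^m := by rw [hx]; ring
  have step1 : (a ⊗ₜ[↥Aplus] c : A ⊗[↥Aplus] ↥Cfsub)
      = ∑ i, (a * (b i * ((s i : ↥Aplus) : A))) ⊗ₜ c := by
    rw [← TensorProduct.sum_tmul, ← Finset.mul_sum, hsum, mul_one]
  rw [step1]
  have step2 : ∀ i, (a * (b i * ((s i : ↥Aplus) : A))) ⊗ₜ[↥Aplus] c
      = ((((s i : ↥Aplus) : A) * x) * (a * b i)) ⊗ₜ (⟨(g:Af)^m, hgm m⟩ : ↥Cfsub) := by
    intro i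
    have e1 : a * (b i * ((s i : ↥Aplus) : A)) = s i • (a * b i) := by
      show _ = (s i : A) * _; ring
    rw [e1, TensorProduct.smul_tmul]
    have e2 : s i • c = (⟨((s i : ↥Aplus) : A) * x, hs i⟩ : ↥Aplus) • (⟨(g:Af)^m, hgm m⟩ : ↥Cfsub) := by
      apply Subtype.ext
      show s i • (c : Af) = (⟨((s i : ↥Aplus) : A) * x, hs i⟩ : ↥Aplus) • ((g:Af)^m)
      rw [Algebra.smul_def, Algebra.smul_def, IsScalarTower.algebraMap_apply ↥Aplus A Af,
        IsScalarTower.algebraMap_apply ↥Aplus A Af]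
      show ψ (s i : A) * (c:Af) = ψ (((s i : ↥Aplus) : A) * x) * (g:Af)^m
      rw [hcg, map_mul]
      ring
    rw [e2, TensorProduct.tmul_smul, TensorProduct.smul_tmul']
    rfl
  rw [Finset.sum_congr rfl fun i _ => step2 i, ← TensorProduct.sum_tmul]
  congr 1
  calc ∑ i, ((s i : ↥Aplus) : A) * x * (a * b i)
      = a * x * ∑ i, b i * ((s i : ↥Aplus) : A) := by rw [Finset.mul_sum]; congr 1; ext i; ring
  _ = a * x := by rw [hsum, mul_one]
end

section
variable {A : Type*} [CommRing A] {Aplus : Subring A} (f : A)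

local notation "Af" => Localization.Away f
local notation "ψ" => algebraMap A (Localization.Away f)
local notation "g" => IsLocalization.Away.invSelf (S := Localization.Away f) f

theorem mu2_bij
    (hW : ∀ x : A, ∃ (n : ℕ) (s : Fin n → ↥Aplus) (b : Fin n → A),
      (∀ i, ((s i : ↥Aplus) : A) * x ∈ Aplus) ∧ ∑ i, b i * ((s i : ↥Aplus) : A) = 1)
    (Cfsub : Submodule ↥Aplus Af) (hgm : ∀ m : ℕ, (g : Af)^m ∈ Cfsub) :
    Function.Bijective
      (TensorProduct.lift
        (((LinearMap.mul ↥Aplus Af).comp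
            (IsScalarTower.toAlgHom ↥Aplus A Af).toLinearMap).compl₂ Cfsub.subtype) :
        A ⊗[↥Aplus] ↥Cfsub →ₗ[↥Aplus] Af) := by
  set μ : A ⊗[↥Aplus] ↥Cfsub →ₗ[↥Aplus] Af :=
    TensorProduct.lift
      (((LinearMap.mul ↥Aplus Af).comp
          (IsScalarTower.toAlgHom ↥Aplus A Af).toLinearMap).compl₂ Cfsub.subtype) with hμ
  have h1m : ∀ m : ℕ, (ψ f)^m * (g:Af)^m = 1 := fun m => by
    rw [← mul_pow, IsLocalization.Away.mul_invSelf, one_pow]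
  have hform : ∀ (a : A) (c : ↥Cfsub), μ (a ⊗ₜ c) = ψ a * (c : Af) := fun a c => by
    simp [hμ, TensorProduct.lift.tmul]
  -- raising lemma
  have hraise : ∀ (x : A) (m M : ℕ), m ≤ M →
      (x ⊗ₜ (⟨(g:Af)^m, hgm m⟩ : ↥Cfsub) : A ⊗[↥Aplus] ↥Cfsub)
        = (x * f^(M - m)) ⊗ₜ ⟨(g:Af)^M, hgm M⟩ := by
    intro x m M hmM
    refine tmul_rewrite_loc f hW Cfsub hgm M x (f^(M-m)) ⟨(g:Af)^m, hgm m⟩ ?_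
    show ψ (f^(M-m)) = (ψ f)^M * (g:Af)^m
    rw [map_pow]
    have hsplit : (ψ f)^M = (ψ f)^(M-m) * (ψ f)^m := by rw [← pow_add]; congr 1; omega
    rw [hsplit, mul_assoc, h1m m, mul_one]
  have hrep : ∀ z : A ⊗[↥Aplus] ↥Cfsub, ∃ (m : ℕ) (x : A),
      z = x ⊗ₜ ⟨(g:Af)^m, hgm m⟩ ∧ ψ x = (ψ f)^m * μ z := by
    intro z
    induction z using TensorProduct.induction_on with
    | zero =>
      exact ⟨0, 0, by rw [TensorProduct.zero_tmul], by rw [map_zero, map_zero, mul_zero]⟩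
    | tmul a c =>
      obtain ⟨⟨x, t⟩, hxt⟩ := IsLocalization.surj (Submonoid.powers f) (c : Af)
      obtain ⟨m, hm⟩ := t.2
      have hm' : f^m = (t : A) := hm
      have hx : ψ x = (ψ f)^m * (c : Af) := by
        rw [← map_pow, hm']
        rw [mul_comm] at hxt
        exact hxt.symm
      refine ⟨m, a * x, tmul_rewrite_loc f hW Cfsub hgm m a x c hx, ?_⟩
      rw [hform, map_mul, hx]
      ring
    | add u v hu hv =>
      obtain ⟨m1, x1, he1, hx1⟩ := hu
      obtain ⟨m2, x2, he2, hx2⟩ := hv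
      refine ⟨max m1 m2, x1 * f^(max m1 m2 - m1) + x2 * f^(max m1 m2 - m2), ?_, ?_⟩
      · rw [he1, he2, hraise x1 m1 (max m1 m2) (le_max_left _ _),
          hraise x2 m2 (max m1 m2) (le_max_right _ _), TensorProduct.add_tmul]
      · rw [map_add, map_mul, map_mul, map_pow, map_pow, hx1, hx2, map_add]
        have e1 : (max m1 m2 - m1) + m1 = max m1 m2 := by omega
        have e2 : (max m1 m2 - m2) + m2 = max m1 m2 := by omega
        calc (ψ f)^m1 * μ u * (ψ f)^(max m1 m2 - m1) + (ψ f)^m2 * μ v * (ψ f)^(max m1 m2 - m2)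
            = (ψ f)^((max m1 m2 - m1) + m1) * μ u + (ψ f)^((max m1 m2 - m2) + m2) * μ v := by
              rw [pow_add, pow_add]; ring
        _ = (ψ f)^(max m1 m2) * (μ u + μ v) := by rw [e1, e2]; ring
  constructor
  · intro z w h
    obtain ⟨m1, x1, he1, hx1⟩ := hrep z
    obtain ⟨m2, x2, he2, hx2⟩ := hrep w
    -- raise both to common level M
    set M := max m1 m2 with hM
    have hz' := (he1.trans (hraise x1 m1 M (le_max_left _ _)))
    have hw' := (he2.trans (hraise x2 m2 M (le_max_right _ _)))
    set y1 := x1 * f^(M - m1) with hy1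
    set y2 := x2 * f^(M - m2) with hy2
    have hψ : ψ y1 = ψ y2 := by
      rw [hy1, hy2, map_mul, map_mul, map_pow, map_pow, hx1, hx2, h]
      have e1 : (M - m1) + m1 = M := by omega
      have e2 : (M - m2) + m2 = M := by omega
      calc (ψ f)^m1 * μ w * (ψ f)^(M - m1) = (ψ f)^((M-m1)+m1) * μ w := by rw [pow_add]; ring
      _ = (ψ f)^((M-m2)+m2) * μ w := by rw [e1, e2]
      _ = (ψ f)^m2 * μ w * (ψ f)^(M - m2) := by rw [pow_add]; ring
    obtain ⟨t, ht⟩ := IsLocalization.exists_of_eq (M := Submonoid.powers f) hψ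
    obtain ⟨k, hk⟩ := t.2
    have hk' : f^k = (t : A) := hk
    have hky : f^k * y1 = f^k * y2 := by rw [hk']; exact ht
    rw [hz', hw']
    rw [hraise y1 M (M + k) (by omega), hraise y2 M (M + k) (by omega)]
    have : M + k - M = k := by omega
    rw [this]
    congr 1
    calc y1 * f^k = f^k * y1 := by ring
    _ = f^k * y2 := hky
    _ = y2 * f^k := by ring
  · intro w
    obtain ⟨⟨x, t⟩, hxt⟩ := IsLocalization.surj (Submonoid.powers f) w
    obtain ⟨m, hm⟩ := t.2
    have hm' : f^m = (t : A) := hm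
    refine ⟨x ⊗ₜ ⟨(g:Af)^m, hgm m⟩, ?_⟩
    rw [hform]
    show ψ x * (g:Af)^m = w
    have : ψ x = w * (ψ f)^m := by rw [← map_pow, hm']; exact hxt.symm
    rw [this, mul_assoc, h1m m, mul_one]
end

-- the "integrality trick": from β x = τ with β, τ ∈ B and x integral over B, some τ^m x ∈ B
theorem pow_mul_mem_of_integral {R : Type*} [CommRing R] (B : Subring R) (x β τ : R)
    (hβ : β ∈ B) (hτ : τ ∈ B) (h : β * x = τ) (hint : IsIntegral ↥B x) :
    ∃ m : ℕ, τ ^ m * x ∈ B := by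
  obtain ⟨p, hmonic, heval⟩ := hint
  by_cases hdeg : p.natDegree = 0
  · -- p = 1, so ring is trivial
    have hp1 : p = 1 := (Polynomial.Monic.natDegree_eq_zero hmonic).mp hdeg
    rw [hp1, Polynomial.eval₂_one] at heval
    haveI : Subsingleton R := subsingleton_of_zero_eq_one heval.symm
    exact ⟨0, by rw [Subsingleton.elim (τ^0 * x) 0]; exact zero_mem B⟩
  · set n := p.natDegree with hn
    have hn1 : 1 ≤ n := Nat.one_le_iff_ne_zero.mpr hdeg
    have heval' : ∑ i ∈ Finset.range (n + 1), (algebraMap ↥B R) (p.coeff i) * x ^ i = 0 := by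
      rw [← Polynomial.eval₂_eq_sum_range]; exact heval
    rw [Finset.sum_range_succ] at heval'
    have hlead : (algebraMap ↥B R) (p.coeff n) = 1 := by
      rw [hn, hmonic.coeff_natDegree]; exact map_one _
    rw [hlead, one_mul] at heval'
    have hxn : x ^ n = -∑ i ∈ Finset.range n, (algebraMap ↥B R) (p.coeff i) * x ^ i := by
      linear_combination heval'
    have hβτ : ∀ i : ℕ, β ^ i * x ^ i = τ ^ i := fun i => by rw [← mul_pow, h]
    refine ⟨n - 1, ?_⟩
    have key : τ ^ (n-1) * x =
        ∑ i ∈ Finset.range n, -((algebraMap ↥B R) (p.coeff i)) * (τ ^ i * β ^ (n-1-i)) := by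
      have e1 : τ ^ (n-1) * x = β ^ (n-1) * x ^ n := by
        have : x ^ n = x ^ (n-1) * x := by rw [← pow_succ]; congr 1; omega
        rw [this, ← mul_assoc, hβτ (n-1)]
      rw [e1, hxn, mul_neg, Finset.mul_sum, ← Finset.sum_neg_distrib]
      apply Finset.sum_congr rfl
      intro i hi
      have hi' : i ≤ n - 1 := by
        have := Finset.mem_range.mp hi; omega
      have e2 : β ^ (n-1) = β ^ i * β ^ (n-1-i) := by rw [← pow_add]; congr 1; omega
      rw [e2]
      have : β ^ i * β ^ (n - 1 - i) * ((algebraMap ↥B R) (p.coeff i) * x ^ i)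
          = (algebraMap ↥B R) (p.coeff i) * (β ^ i * x ^ i) * β ^ (n-1-i) := by ring
      rw [this, hβτ i]
      ring
    rw [key]
    apply sum_mem
    intro i _
    exact mul_mem (neg_mem (SetLike.coe_mem _)) (mul_mem (pow_mem hτ i) (pow_mem hβ _))

section
variable {A : Type*} [CommRing A] {Aplus : Subring A}


theorem closed1
    (hdich : ∀ (P : Ideal ↥Aplus), P.IsMaximal → ∀ x : A,
      (∃ σ : ↥Aplus, σ ∉ P ∧ (σ:A) * x ∈ Aplus) ∨
      (∃ α σ : ↥Aplus, σ ∉ P ∧ (α:A) * x = (σ:A)))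
    (B : Subring A) (hAB : ∀ s : ↥Aplus, (s : A) ∈ B) (x : A) (hx : IsIntegral ↥B x) :
    x ∈ B := by
  set J : Ideal ↥Aplus :=
    { carrier := {t | (t : A) * x ∈ B}
      add_mem' := fun ha hb => by simpa [add_mul] using add_mem ha hb
      zero_mem' := by simpa using zero_mem B
      smul_mem' := fun r t ht => by
        have : ((r • t : ↥Aplus) : A) * x = (r : A) * ((t : A) * x) := by
          push_cast [smul_eq_mul]; ring
        simpa [Set.mem_setOf_eq, this, mul_assoc] using mul_mem (hAB r) ht } with hJ
  have hJtop : J = ⊤ := by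
    by_contra hne
    obtain ⟨P, hP, hle⟩ := Ideal.exists_le_maximal _ hne
    rcases hdich P hP x with ⟨σ, hσP, hσ⟩ | ⟨α, σ, hσP, hα⟩
    · exact hσP (hle (hAB ⟨_, hσ⟩ : (σ : A) * x ∈ B))
    · obtain ⟨m, hm⟩ := pow_mul_mem_of_integral B x (α : A) (σ : A) (hAB α) (hAB σ) hα hx
      have : σ ^ m ∈ J := by
        show ((σ ^ m : ↥Aplus) : A) * x ∈ B
        push_cast
        exact hm
      exact hσP (hP.isPrime.mem_of_pow_mem m (hle this))
  have h1 : (1 : ↥Aplus) ∈ J := hJtop ▸ Submodule.mem_top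
  have h2 : ((1 : ↥Aplus) : A) * x ∈ B := h1
  simpa using h2
end

section
variable {A : Type*} [CommRing A] {Aplus : Subring A} (f : A)

local notation "Af" => Localization.Away f
local notation "ψ" => algebraMap A (Localization.Away f)
local notation "g" => IsLocalization.Away.invSelf (S := Localization.Away f) f

theorem closed2
    (hdich : ∀ (P : Ideal ↥Aplus), P.IsMaximal → ∀ x : A,
      (∃ σ : ↥Aplus, σ ∉ P ∧ (σ:A) * x ∈ Aplus) ∨
      (∃ α σ : ↥Aplus, σ ∉ P ∧ (α:A) * x = (σ:A)))
    (B : Subring Af) (hψB : ∀ s : ↥Aplus, ψ (s : A) ∈ B) (hgB : (g : Af) ∈ B)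
    (x : Af) (hx : IsIntegral ↥B x) :
    x ∈ B := by
  set J : Ideal ↥Aplus :=
    { carrier := {t | ψ (t : A) * x ∈ B}
      add_mem' := fun {a b} ha hb => by
        have ha' : ψ (a:A) * x ∈ B := ha
        have hb' : ψ (b:A) * x ∈ B := hb
        simpa [Set.mem_setOf_eq, add_mul] using add_mem ha' hb'
      zero_mem' := by
        have : ψ ((0 : ↥Aplus) : A) * x = 0 := by push_cast [map_zero]; ring
        simpa [Set.mem_setOf_eq, this] using zero_mem B
      smul_mem' := fun r t ht => by
        have ht' : ψ (t:A) * x ∈ B := ht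
        have : ψ ((r • t : ↥Aplus) : A) * x = ψ (r : A) * (ψ (t : A) * x) := by
          push_cast [smul_eq_mul, map_mul]; ring
        simpa [Set.mem_setOf_eq, this, mul_assoc] using mul_mem (hψB r) ht' } with hJ
  have hJmem : ∀ t : ↥Aplus, t ∈ J ↔ ψ (t : A) * x ∈ B := fun t => Iff.rfl
  have hJtop : J = ⊤ := by
    by_contra hne
    obtain ⟨P, hP, hle⟩ := Ideal.exists_le_maximal _ hne
    haveI hPp : P.IsPrime := hP.isPrime
    -- write x = ψ y * g ^ m
    obtain ⟨⟨y, t⟩, hyt⟩ := IsLocalization.surj (Submonoid.powers f) x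
    obtain ⟨m, hm⟩ := t.2
    have hm' : f ^ m = (t : A) := hm
    have hxym : x * (ψ f) ^ m = ψ y := by rw [← map_pow, hm']; exact hyt
    have hfg : (ψ f) * (g : Af) = 1 := IsLocalization.Away.mul_invSelf f
    have hfgm : ∀ k : ℕ, (ψ f) ^ k * (g : Af) ^ k = 1 := fun k => by
      rw [← mul_pow, hfg, one_pow]
    have hxg : x = ψ y * (g : Af) ^ m := by
      calc x = x * ((ψ f) ^ m * (g:Af) ^ m) := by rw [hfgm m, mul_one]
      _ = (x * (ψ f) ^ m) * (g:Af) ^ m := by ring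
      _ = ψ y * (g:Af) ^ m := by rw [hxym]
    -- helper: conclude a contradiction from β * x = τ with β image, τ image with τ ∉ P
    have hfinish : ∀ β τ : ↥Aplus, τ ∉ P → ψ (β : A) * x = ψ (τ : A) → False := by
      intro β τ hτP hβτ
      obtain ⟨m', hm'⟩ := pow_mul_mem_of_integral B x (ψ (β:A)) (ψ (τ:A))
        (hψB β) (hψB τ) hβτ hx
      have : τ ^ m' ∈ J := by
        rw [hJmem]
        have : ψ ((τ ^ m' : ↥Aplus) : A) = (ψ (τ:A)) ^ m' := by push_cast [map_pow]; rfl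
        rw [this]
        exact hm'
      exact hτP (hPp.mem_of_pow_mem m' (hle this))
    rcases hdich P hP f with ⟨σ₁, hσ₁P, hσ₁⟩ | ⟨α₀, σ₀, hσ₀P, hα₀⟩
    · -- σ₁ f ∈ Aplus
      rcases hdich P hP y with ⟨σ', hσ'P, hσ'⟩ | ⟨α, σ', hσ'P, hα⟩
      · -- σ' y ∈ Aplus : σ' ∈ J
        have : σ' ∈ J := by
          rw [hJmem, hxg]
          have e : ψ (σ' : A) * (ψ y * (g:Af) ^ m) = ψ ((σ':A) * y) * (g:Af)^m := by
            rw [map_mul]; ring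
          rw [e]
          exact mul_mem (hψB ⟨_, hσ'⟩) (pow_mem hgB m)
        exact hσ'P (hle this)
      · -- α y = σ' : get β x = τ
        set c : ↥Aplus := ⟨(σ₁ : A) * f, hσ₁⟩ with hc
        refine hfinish (α * c ^ m) (σ' * σ₁ ^ m)
          (fun hmem => ?_) ?_
        · rcases hPp.mem_or_mem hmem with h' | h''
          · exact hσ'P h'
          · exact hσ₁P (hPp.mem_of_pow_mem m h'')
        · have e1 : ψ ((α * c ^ m : ↥Aplus) : A) = ψ (α : A) * (ψ (σ₁:A))^m * (ψ f)^m := by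
            push_cast [map_mul, map_pow]
            rw [show ((c : ↥Aplus) : A) = (σ₁ : A) * f from rfl, map_mul]
            ring
          have e2 : ψ ((σ' * σ₁ ^ m : ↥Aplus) : A) = ψ (σ' : A) * (ψ (σ₁:A))^m := by
            push_cast [map_mul, map_pow]
            ring
          rw [e1, e2]
          calc ψ (α:A) * (ψ (σ₁:A))^m * (ψ f)^m * x
              = ψ (α:A) * (x * (ψ f)^m) * (ψ (σ₁:A))^m := by ring
          _ = ψ (α:A) * ψ y * (ψ (σ₁:A))^m := by rw [hxym]
          _ = ψ ((α:A) * y) * (ψ (σ₁:A))^m := by rw [map_mul]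
          _ = ψ (σ' : A) * (ψ (σ₁:A))^m := by rw [hα]
    · -- α₀ f = σ₀
      have hσ₀f : ψ (α₀ : A) * ψ f = ψ (σ₀ : A) := by rw [← map_mul, hα₀]
      have hkey : ψ ((σ₀ ^ m : ↥Aplus) : A) * x = ψ (y * (α₀:A) ^ m) := by
        have : ψ ((σ₀ ^ m : ↥Aplus):A) = (ψ (α₀:A))^m * (ψ f)^m := by
          push_cast [map_pow]
          rw [← mul_pow, ← map_mul, hα₀]
        rw [this, map_mul, map_pow]
        calc (ψ (α₀:A))^m * (ψ f)^m * x = (ψ (α₀:A))^m * (x * (ψ f)^m) := by ring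
        _ = (ψ (α₀:A))^m * ψ y := by rw [hxym]
        _ = ψ y * (ψ (α₀:A))^m := by ring
      set z : A := y * (α₀:A) ^ m with hz
      rcases hdich P hP z with ⟨σ', hσ'P, hσ'⟩ | ⟨α', σ', hσ'P, hα'⟩
      · -- σ' z ∈ Aplus
        have : σ' * σ₀ ^ m ∈ J := by
          rw [hJmem]
          have e : ψ ((σ' * σ₀ ^ m : ↥Aplus) : A) * x = ψ (σ':A) * (ψ ((σ₀ ^ m : ↥Aplus):A) * x) := by
            push_cast [map_mul]; ring
          rw [e, hkey, ← map_mul]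
          exact hψB ⟨_, hσ'⟩
        have hmem := hle this
        rcases hPp.mem_or_mem hmem with h' | h''
        · exact hσ'P h'
        · exact hσ₀P (hPp.mem_of_pow_mem m h'')
      · -- α' z = σ'
        refine hfinish (α' * σ₀ ^ m) σ' hσ'P ?_
        have e1 : ψ ((α' * σ₀ ^ m : ↥Aplus) : A) * x = ψ (α':A) * (ψ ((σ₀^m : ↥Aplus):A) * x) := by
          push_cast [map_mul]; ring
        rw [e1, hkey, ← map_mul, hα']
  have h1 : (1 : ↥Aplus) ∈ J := hJtop ▸ Submodule.mem_top
  have h2 : ψ ((1 : ↥Aplus) : A) * x ∈ B := h1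
  simpa using h2
end

/-- Let `A⁺ ⊆ A` be commutative rings with weakly surjective inclusion and
`f ∈ A`.  Let `A⁺[f]` be the subring of `A` generated by `A⁺` and `f`, `A_f` the localization of
`A` at `f`, `A⁺[1/f]` the subring of `A_f` generated by the image of `A⁺` and `1/f`, `C` the
integral closure of `A⁺[f]` in `A`, and `C_f` the integral closure of `A⁺[1/f]` in `A_f`.  Then
the natural homomorphisms `A ⊗_{A⁺} C → A` and `A ⊗_{A⁺} C_f → A_f` are isomorphisms.  If,
moreover, `A⁺ ⊆ A` is a Prüfer extension and `A` is noetherian, then `A⁺[f]` is integrally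
closed in `A` and `A⁺[1/f]` is integrally closed in `A_f`. -/
theorem statement7 {A : Type*} [CommRing A] (Aplus : Subring A)
    (hws : (algebraMap ↥Aplus A).WeaklySurjective) (f : A) :
    let Af := Localization.Away f
    let B1 : Subring A := Subring.closure ((Aplus : Set A) ∪ {f})
    let B2 : Subring Af := Subring.closure
      (((algebraMap A Af) '' (Aplus : Set A)) ∪ {IsLocalization.Away.invSelf (S := Af) f})
    let C : Subring A := (integralClosure ↥B1 A).toSubring
    let Cf : Subring Af := (integralClosure ↥B2 Af).toSubring
    let Csub : Submodule ↥Aplus A := Submodule.span ↥Aplus (C : Set A)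
    let Cfsub : Submodule ↥Aplus Af := Submodule.span ↥Aplus (Cf : Set Af)
    (Function.Bijective
        (TensorProduct.lift ((LinearMap.mul ↥Aplus A).compl₂ Csub.subtype) :
          A ⊗[↥Aplus] ↥Csub →ₗ[↥Aplus] A) ∧
      Function.Bijective
        (TensorProduct.lift
          (((LinearMap.mul ↥Aplus Af).comp
              (IsScalarTower.toAlgHom ↥Aplus A Af).toLinearMap).compl₂ Cfsub.subtype) :
          A ⊗[↥Aplus] ↥Cfsub →ₗ[↥Aplus] Af)) ∧
    (Aplus.IsPruferExtension → IsNoetherianRing A →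
      (∀ x : A, IsIntegral ↥B1 x → x ∈ B1) ∧ (∀ x : Af, IsIntegral ↥B2 x → x ∈ B2)) := by
  intro Af B1 B2 C Cf Csub Cfsub
  -- elementwise weak surjectivity, combination form
  have hW : ∀ x : A, ∃ (n : ℕ) (s : Fin n → ↥Aplus) (b : Fin n → A),
      (∀ i, ((s i : ↥Aplus) : A) * x ∈ Aplus) ∧ ∑ i, b i * ((s i : ↥Aplus) : A) = 1 := by
    intro x
    obtain ⟨n, s, b, hsD, hsum⟩ := ideal_comb Aplus (Dx Aplus x) (ws_elem Aplus hws x)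
    exact ⟨n, s, b, fun i => hsD i, hsum⟩
  have hAB1 : ∀ s : ↥Aplus, (s : A) ∈ B1 := fun s =>
    Subring.subset_closure (Or.inl s.2)
  have h1C : (1 : A) ∈ Csub :=
    Submodule.subset_span (one_mem C)
  have hψB2 : ∀ s : ↥Aplus, algebraMap A Af (s : A) ∈ B2 := fun s =>
    Subring.subset_closure (Or.inl ⟨(s : A), s.2, rfl⟩)
  have hgB2 : (IsLocalization.Away.invSelf (S := Af) f) ∈ B2 :=
    Subring.subset_closure (Or.inr rfl)
  have hB2Cf : ∀ w : Af, w ∈ B2 → w ∈ Cf := by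
    intro w hw
    show w ∈ (integralClosure ↥B2 Af).toSubring
    rw [Subalgebra.mem_toSubring]
    exact isIntegral_algebraMap (x := (⟨w, hw⟩ : ↥B2))
  have hgm : ∀ m : ℕ, (IsLocalization.Away.invSelf (S := Af) f) ^ m ∈ Cfsub := fun m =>
    Submodule.subset_span (hB2Cf _ (pow_mem hgB2 m))
  refine ⟨⟨mu1_bij hW Csub h1C, mu2_bij f hW Cfsub hgm⟩, ?_⟩
  intro hpr _hnoeth
  have hdich := fun P hP x => prufer_dichotomy Aplus hpr P hP x
  exact ⟨fun x hx => closed1 hdich B1 hAB1 x hx,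
    fun x hx => closed2 f hdich B2 hψB2 hgB2 x hx⟩
end
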